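/- Let X, Y be real symmetric n×n matrices with X positive definite. Then the matrix M_{XY} = [[X² + Y², Y],[Y, I]] admits the factorization M_{XY} = Sᵀ D_X S, where D_X = [[X, 0],[0, X]] and S = [[X^{1/2}, 0],[X^{−1/2} Y, X^{−1/2}]] is a symplectic matrix (X^{1/2} denoting the positive square root of X). -/

import Mathlib

open Matrix

section
open scoped ComplexOrder
/-- The positive semidefinite square root of a positive semidefinite matrix, as defined in
Mathlib (Dec 2024) under the name `Matrix.PosSemidef.sqrt`, since removed. -/
noncomputable def Matrix.PosSemidef.sqrt {𝕜 : Type*} [RCLike 𝕜] {m : Type*} [Fintype m]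
    [DecidableEq m] {A : Matrix m m 𝕜} (hA : A.PosSemidef) : Matrix m m 𝕜 :=
  hA.1.eigenvectorUnitary.1 * diagonal ((↑) ∘ (Real.sqrt ∘ hA.1.eigenvalues)) *
  (star hA.1.eigenvectorUnitary : Matrix m m 𝕜)

theorem Matrix.PosSemidef.sqrt_mul_self {𝕜 : Type*} [RCLike 𝕜] {m : Type*} [Fintype m]
    [DecidableEq m] {A : Matrix m m 𝕜} (hA : A.PosSemidef) : hA.sqrt * hA.sqrt = A := by
  unfold Matrix.PosSemidef.sqrt
  have hU : (star hA.1.eigenvectorUnitary : Matrix m m 𝕜) * hA.1.eigenvectorUnitary.1 = 1 :=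
    Unitary.coe_star_mul_self _
  have hD : diagonal ((↑) ∘ (Real.sqrt ∘ hA.1.eigenvalues)) *
      diagonal ((↑) ∘ (Real.sqrt ∘ hA.1.eigenvalues)) =
      diagonal (RCLike.ofReal ∘ hA.1.eigenvalues : m → 𝕜) := by
    rw [diagonal_mul_diagonal]
    congr 1
    funext i
    simp only [Function.comp_apply]
    rw [← RCLike.ofReal_mul, Real.mul_self_sqrt (hA.eigenvalues_nonneg i)]
  calc _ = hA.1.eigenvectorUnitary.1 * (diagonal ((↑) ∘ (Real.sqrt ∘ hA.1.eigenvalues)) *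
        ((star hA.1.eigenvectorUnitary : Matrix m m 𝕜) * hA.1.eigenvectorUnitary.1) *
        diagonal ((↑) ∘ (Real.sqrt ∘ hA.1.eigenvalues))) *
        (star hA.1.eigenvectorUnitary : Matrix m m 𝕜) := by
          simp only [Matrix.mul_assoc]
    _ = A := by
      rw [hU, Matrix.mul_one, hD]
      conv_rhs => rw [hA.1.spectral_theorem]
      rw [Unitary.conjStarAlgAut_apply]

theorem Matrix.PosSemidef.sqrt_isHermitian' {𝕜 : Type*} [RCLike 𝕜] {m : Type*} [Fintype m]
    [DecidableEq m] {A : Matrix m m 𝕜} (hA : A.PosSemidef) : hA.sqrt.IsHermitian := by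
  unfold Matrix.PosSemidef.sqrt
  rw [Matrix.star_eq_conjTranspose]
  refine isHermitian_mul_mul_conjTranspose _ (isHermitian_diagonal_of_self_adjoint _ ?_)
  funext i
  simp [IsSelfAdjoint, RCLike.conj_ofReal]

end

/-- The standard symplectic matrix `J = [[0, I],[−I, 0]]`. -/
def stdJ (n : ℕ) : Matrix (Fin n ⊕ Fin n) (Fin n ⊕ Fin n) ℝ :=
  fromBlocks 0 1 (-1) 0

/-- A real `2n×2n` matrix is symplectic if `Sᵀ J S = J`. -/
def IsSymplecticMat {n : ℕ} (S : Matrix (Fin n ⊕ Fin n) (Fin n ⊕ Fin n) ℝ) : Prop :=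
  Sᵀ * stdJ n * S = stdJ n

/-- The Fermi matrix `M_{XY} = [[X² + Y², Y],[Y, I]]` factorizes as `Sᵀ D_X S` with
`D_X = [[X, 0],[0, X]]` and the symplectic matrix `S = [[X^{1/2}, 0],[X^{−1/2}Y, X^{−1/2}]]`. -/
theorem fermi_matrix_factorization
    (n : ℕ) (hn : 1 ≤ n) (X Y : Matrix (Fin n) (Fin n) ℝ)
    (hX : X.IsSymm) (hY : Y.IsSymm) (hXpd : X.PosDef) :
    IsSymplecticMat
        (fromBlocks hXpd.posSemidef.sqrt 0
          (hXpd.posSemidef.sqrt⁻¹ * Y) hXpd.posSemidef.sqrt⁻¹) ∧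
      fromBlocks (X * X + Y * Y) Y Y 1 =
        (fromBlocks hXpd.posSemidef.sqrt 0
            (hXpd.posSemidef.sqrt⁻¹ * Y) hXpd.posSemidef.sqrt⁻¹)ᵀ *
          fromBlocks X 0 0 X *
          (fromBlocks hXpd.posSemidef.sqrt 0
            (hXpd.posSemidef.sqrt⁻¹ * Y) hXpd.posSemidef.sqrt⁻¹) := by
  set R := hXpd.posSemidef.sqrt with hR
  have hRR : R * R = X := hXpd.posSemidef.sqrt_mul_self
  have hRsym : Rᵀ = R := by
    have := hXpd.posSemidef.sqrt_isHermitian'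
    simpa [Matrix.IsHermitian, conjTranspose_eq_transpose_of_trivial] using this
  have hdet : R.det ≠ 0 := by
    intro h
    have : X.det = 0 := by rw [← hRR, det_mul, h, mul_zero]
    exact (ne_of_gt hXpd.det_pos) this
  have hinv : R⁻¹ * R = 1 := nonsing_inv_mul R hdet.isUnit
  have hinv' : R * R⁻¹ = 1 := mul_nonsing_inv R hdet.isUnit
  have hRinvsym : (R⁻¹)ᵀ = R⁻¹ := by rw [transpose_nonsing_inv, hRsym]
  have hRXR : R⁻¹ * X * R⁻¹ = 1 := by
    rw [← hRR, ← mul_assoc, mul_assoc (R⁻¹ * R), hinv, hinv', mul_one]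
  have hYsym : Yᵀ = Y := hY
  constructor
  · unfold IsSymplecticMat stdJ
    rw [fromBlocks_transpose, fromBlocks_multiply, fromBlocks_multiply]
    congr 1 <;> simp [hRsym, hRinvsym, hYsym, transpose_mul, Matrix.mul_assoc]
    swap; exact hinv'; swap; exact hinv
    rw [hinv, Matrix.mul_one, ← Matrix.mul_assoc R, hinv', Matrix.one_mul]
    simp
  · rw [fromBlocks_transpose, fromBlocks_multiply, fromBlocks_multiply]
    have h1 : R * X * R = X * X := by
      rw [← hRR]; simp only [Matrix.mul_assoc]
    have h2 : Y * R⁻¹ * X * (R⁻¹ * Y) = Y * Y := by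
      calc Y * R⁻¹ * X * (R⁻¹ * Y) = Y * (R⁻¹ * X * R⁻¹) * Y := by
            simp only [Matrix.mul_assoc]
        _ = Y * Y := by rw [hRXR, Matrix.mul_one]
    congr 1 <;> simp [hRsym, hRinvsym, hYsym, transpose_mul]
    · rw [h1, h2]
    · rw [Matrix.mul_assoc Y R⁻¹ X, Matrix.mul_assoc Y (R⁻¹ * X) R⁻¹, hRXR, Matrix.mul_one]
    · rw [← Matrix.mul_assoc (R⁻¹ * X) R⁻¹ Y, hRXR, Matrix.one_mul]
    · exact hRXR.symm
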